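/- Ihara–Bass formula: for a finite graph G = (V,E) with adjacency matrix A, non-backtracking matrix B, and degree diagonal matrix D, we have for all z ∈ ℂ: det(z·1_E − B) = (z² − 1)^{χ−1} · det(z²·1_V − zA + D − 1_V), where χ = |E|/2 − |V| + 1 (here |E| counts oriented edges, so |E|/2 is the number of undirected edges). -/

import Mathlib

/-- A finite graph given by oriented edges: each edge `e` has an origin `src e`, a
destination `tgt e`, and the edge set carries a fixed-point-free involution
`e ↦ inv e` with `tgt (inv e) = src e`. -/
structure OrientedGraph (V E : Type*) where
  src : E → V
  tgt : E → V
  inv : E → E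
  inv_inv : ∀ e, inv (inv e) = e
  inv_ne : ∀ e, inv e ≠ e
  tgt_inv : ∀ e, tgt (inv e) = src e

variable {V E : Type*} [Fintype V] [Fintype E] [DecidableEq V] [DecidableEq E]

/-- The adjacency matrix: `A v u` is the number of oriented edges from `u` to `v`. -/
noncomputable def adjMatrix (G : OrientedGraph V E) : Matrix V V ℂ :=
  Matrix.of fun v u =>
    ((Finset.univ.filter fun e : E => G.src e = u ∧ G.tgt e = v).card : ℂ)

/-- The non-backtracking matrix `B`, acting by `(Bφ)(f) = ∑_{e : e₊ = f₋, e ≠ f⁻¹} φ(e)`. -/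
noncomputable def nbMatrix (G : OrientedGraph V E) : Matrix E E ℂ :=
  Matrix.of fun f e => if G.tgt e = G.src f ∧ e ≠ G.inv f then 1 else 0

/-- The degree of a vertex: the number of outgoing edges. -/
def gdeg (G : OrientedGraph V E) (v : V) : ℕ :=
  (Finset.univ.filter fun e : E => G.src e = v).card

/-- `G` is `d`-regular: every vertex has degree `d`. -/
def RegularGraph (G : OrientedGraph V E) (d : ℕ) : Prop :=
  ∀ v : V, gdeg G v = d

/-- The degree diagonal matrix `D`. -/
noncomputable def degMatrix (G : OrientedGraph V E) : Matrix V V ℂ :=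
  Matrix.diagonal fun v => (gdeg G v : ℂ)


set_option linter.unusedSectionVars false

namespace IharaBass
open Matrix

variable (G : OrientedGraph V E)

noncomputable def Smat : Matrix V E ℂ := Matrix.of fun v e => if G.src e = v then 1 else 0
noncomputable def Tmat : Matrix V E ℂ := Matrix.of fun v e => if G.tgt e = v then 1 else 0
noncomputable def Jmat : Matrix E E ℂ := Matrix.of fun e f => if f = G.inv e then 1 else 0

lemma src_inv (e : E) : G.src (G.inv e) = G.tgt e := by
  conv_rhs => rw [← G.inv_inv e, G.tgt_inv]

lemma J_mul_J : Jmat G * Jmat G = 1 := by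
  ext e g
  simp only [Jmat, Matrix.mul_apply, Matrix.of_apply, Matrix.one_apply]
  rw [Finset.sum_eq_single (G.inv e)]
  · simp [G.inv_inv, eq_comm]
  · intro f _ hf; simp [hf]
  · simp

lemma T_mul_J : Tmat G * Jmat G = Smat G := by
  ext v f
  simp only [Tmat, Jmat, Smat, Matrix.mul_apply, Matrix.of_apply]
  rw [Finset.sum_eq_single (G.inv f)]
  · simp [G.inv_inv, G.tgt_inv]
  · intro e _ he
    have : f ≠ G.inv e := by
      intro h; exact he (by rw [h, G.inv_inv])
    simp [this]
  · simp

lemma T_mul_St : Tmat G * (Smat G)ᵀ = adjMatrix G := by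
  ext v u
  simp only [Tmat, Smat, adjMatrix, Matrix.mul_apply, Matrix.of_apply, Matrix.transpose_apply]
  rw [Finset.card_filter]
  push_cast
  apply Finset.sum_congr rfl
  intro e _
  by_cases h1 : G.tgt e = v <;> by_cases h2 : G.src e = u <;> simp [h1, h2]

lemma S_mul_St : Smat G * (Smat G)ᵀ = degMatrix G := by
  ext v u
  simp only [Smat, degMatrix, Matrix.mul_apply, Matrix.of_apply, Matrix.transpose_apply,
    Matrix.diagonal_apply]
  by_cases h : v = u
  · subst h
    rw [gdeg, Finset.card_filter]
    push_cast
    simp only [if_pos rfl]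
    apply Finset.sum_congr rfl
    intro e _
    by_cases h1 : G.src e = v <;> simp [h1]
  · rw [if_neg h]
    apply Finset.sum_eq_zero
    intro e _
    by_cases h1 : G.src e = v <;> by_cases h2 : G.src e = u <;> simp_all

lemma nb_eq : nbMatrix G = (Smat G)ᵀ * Tmat G - Jmat G := by
  ext f e
  simp only [nbMatrix, Smat, Tmat, Jmat, Matrix.sub_apply, Matrix.mul_apply, Matrix.of_apply,
    Matrix.transpose_apply]
  have hsum : ∑ v, (if G.src f = v then (1:ℂ) else 0) * (if G.tgt e = v then 1 else 0)
      = if G.tgt e = G.src f then 1 else 0 := by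
    rw [Finset.sum_eq_single (G.src f)]
    · simp [eq_comm]
    · intro v _ hv; simp [Ne.symm hv]
    · simp
  rw [hsum]
  by_cases h1 : G.tgt e = G.src f <;> by_cases h2 : e = G.inv f <;>
    simp_all [src_inv]
  · exact h1 (h2 ▸ G.tgt_inv f)

noncomputable def enc : E → ℕ := fun e => (Fintype.equivFin E e : ℕ)

lemma enc_inj : Function.Injective (enc (E := E)) := by
  intro a b h
  have := Fin.val_injective h
  exact (Fintype.equivFin E).injective this

def Rset : Type _ := {e : E // enc e < enc (G.inv e)}

noncomputable instance : Fintype (Rset G) := by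
  unfold Rset; exact Subtype.fintype _

lemma pred_inv {e : E} (h : ¬ enc e < enc (G.inv e)) :
    enc (G.inv e) < enc (G.inv (G.inv e)) := by
  rw [G.inv_inv]
  rcases lt_or_eq_of_le (not_lt.mp h) with h' | h'
  · exact h'
  · exact absurd (enc_inj h') (G.inv_ne e)

noncomputable def pairEquiv : Bool × Rset G ≃ E where
  toFun := fun p => if p.1 then G.inv p.2.1 else p.2.1
  invFun := fun e => if h : enc e < enc (G.inv e) then (false, ⟨e, h⟩)
    else (true, ⟨G.inv e, pred_inv G h⟩)
  left_inv := by
    rintro ⟨b, ⟨e, he⟩⟩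
    cases b
    · simp [he]
    · have h2 : ¬ enc (G.inv e) < enc e := lt_asymm he
      simp [G.inv_inv, h2]
  right_inv := by
    intro e
    by_cases h : enc e < enc (G.inv e)
    · simp [h]
    · simp [h, G.inv_inv]

lemma card_Rset (m : ℕ) (hm : Fintype.card E = 2 * m) : Fintype.card (Rset G) = m := by
  have := Fintype.card_congr (pairEquiv G)
  rw [Fintype.card_prod, Fintype.card_bool, hm] at this
  omega

lemma det_zI_add_J (m : ℕ) (hm : Fintype.card E = 2 * m) (z : ℂ) :
    (z • (1 : Matrix E E ℂ) + Jmat G).det = (z ^ 2 - 1) ^ m := by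
  classical
  have hre : (z • (1 : Matrix E E ℂ) + Jmat G).submatrix (pairEquiv G) (pairEquiv G)
      = Matrix.blockDiagonal (fun _ : Rset G =>
          Matrix.of fun b b' : Bool => if b = b' then z else 1) := by
    ext ⟨b, r⟩ ⟨b', r'⟩
    simp only [Matrix.submatrix_apply, Matrix.add_apply, Matrix.smul_apply, Matrix.one_apply,
      Jmat, Matrix.of_apply, Matrix.blockDiagonal_apply, pairEquiv, Equiv.coe_fn_mk]
    rcases r with ⟨e, he⟩; rcases r' with ⟨e', he'⟩
    by_cases hrr : e = e'
    · subst hrr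
      cases b <;> cases b' <;>
        simp [Subtype.ext_iff, G.inv_inv, (G.inv_ne e), (G.inv_ne e).symm, smul_eq_mul]
      · exact fun h => absurd rfl h
      · rfl
      · rfl
      · exact fun h => absurd rfl h
    · have h1 : e ≠ G.inv e' := by
        intro h; rw [h] at he; rw [G.inv_inv] at he; omega
      have h2 : G.inv e ≠ e' := by
        intro h; rw [← h] at he'; rw [G.inv_inv] at he'; omega
      have h3 : G.inv e ≠ G.inv e' := fun h => hrr (by
        have := congrArg G.inv h; rwa [G.inv_inv, G.inv_inv] at this)
      have hrr' : ¬ (⟨e, he⟩ : Rset G) = ⟨e', he'⟩ := by simp [Subtype.ext_iff, hrr]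
      cases b <;> cases b' <;> simp [hrr, h1, h2, h3, hrr', Ne.symm h1, Ne.symm h2, Ne.symm h3,
        Subtype.ext_iff, smul_eq_mul, G.inv_inv, Ne.symm hrr] <;> exact fun h => absurd h hrr'
  have hds := Matrix.det_submatrix_equiv_self (pairEquiv G) (z • (1 : Matrix E E ℂ) + Jmat G)
  rw [← hds, hre, Matrix.det_blockDiagonal]
  have hdet2 : (Matrix.of fun b b' : Bool => if b = b' then z else 1).det = z ^ 2 - 1 := by
    rw [← Matrix.det_submatrix_equiv_self finTwoEquiv]
    have : (Matrix.of fun b b' : Bool => if b = b' then z else 1).submatrix finTwoEquiv finTwoEquiv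
        = !![z, 1; 1, z] := by
      ext i j; fin_cases i <;> fin_cases j <;> simp [finTwoEquiv]
    rw [this, Matrix.det_fin_two_of]
    ring
  simp [hdet2, Finset.prod_const, card_Rset G m hm]

lemma key (m : ℕ) (hm : Fintype.card E = 2 * m) (z : ℂ) (hz : z ^ 2 - 1 ≠ 0) :
    (z • (1 : Matrix E E ℂ) - nbMatrix G).det * (z ^ 2 - 1) ^ (Fintype.card V) =
      (z ^ 2 - 1) ^ m *
        ((z ^ 2) • (1 : Matrix V V ℂ) - z • adjMatrix G + degMatrix G
          - (1 : Matrix V V ℂ)).det := by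
  classical
  set J := Jmat G with hJ
  set D2 : Matrix E E ℂ := z • 1 + J with hD2
  have hmulJ : D2 * (z • 1 - J) = (z ^ 2 - 1) • 1 := by
    rw [hD2, add_mul, mul_sub, mul_sub, smul_mul_smul_comm, one_mul, Matrix.smul_mul,
      Matrix.mul_smul, one_mul, mul_one, J_mul_J]
    rw [sub_smul, one_smul]
    ring_nf
    abel
  have hrinv : D2 * ((z ^ 2 - 1)⁻¹ • (z • 1 - J)) = 1 := by
    rw [Matrix.mul_smul, hmulJ, smul_smul, inv_mul_cancel₀ hz, one_smul]
  haveI : Invertible D2 := invertibleOfRightInverse _ _ hrinv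
  have hinvOf : ⅟D2 = (z ^ 2 - 1)⁻¹ • (z • 1 - J) := invOf_eq_right_inv hrinv
  set M : Matrix (V ⊕ E) (V ⊕ E) ℂ := Matrix.fromBlocks 1 (Tmat G) (Smat G)ᵀ D2 with hM
  have h1 : M.det = (z • (1 : Matrix E E ℂ) - nbMatrix G).det := by
    rw [hM, Matrix.det_fromBlocks_one₁₁]
    congr 1
    rw [nb_eq, hD2]
    abel
  have h2 : M.det = D2.det * ((1 : Matrix V V ℂ)
      - (z ^ 2 - 1)⁻¹ • (z • adjMatrix G - degMatrix G)).det := by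
    rw [hM, Matrix.det_fromBlocks₂₂, hinvOf]
    congr 3
    rw [Matrix.mul_smul, Matrix.smul_mul]
    congr 1
    simp only [hJ, Matrix.mul_sub, Matrix.sub_mul, Matrix.mul_smul, Matrix.smul_mul,
      Matrix.mul_one, T_mul_J, T_mul_St, S_mul_St]
  have hDdet : D2.det = (z ^ 2 - 1) ^ m := det_zI_add_J G m hm z
  have h3 : ((1 : Matrix V V ℂ) - (z ^ 2 - 1)⁻¹ • (z • adjMatrix G - degMatrix G)).det
        * (z ^ 2 - 1) ^ (Fintype.card V)
      = ((z ^ 2) • (1 : Matrix V V ℂ) - z • adjMatrix G + degMatrix G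
          - (1 : Matrix V V ℂ)).det := by
    rw [mul_comm, ← Matrix.det_smul]
    congr 1
    rw [smul_sub, smul_smul, mul_inv_cancel₀ hz, one_smul, sub_smul, one_smul]
    abel
  rw [← h1, h2, hDdet, mul_assoc, h3]

end IharaBass

open Polynomial in
/-- Ihara–Bass formula: with `m = |E|/2` the number of undirected edges and
`χ − 1 = m − |V|`, for all `z ∈ ℂ`,
`det(z·1_E − B) = (z² − 1)^{m − |V|} · det(z²·1_V − z·A + D − 1_V)`.
Since the Euler characteristic exponent `χ − 1 = m − |V|` may be negative, the identity is
stated with both sides multiplied by `(z² − 1)^{|V|}`. -/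
theorem stmt1 (G : OrientedGraph V E) (m : ℕ) (hm : Fintype.card E = 2 * m) (z : ℂ) :
    (z • (1 : Matrix E E ℂ) - nbMatrix G).det * (z ^ 2 - 1) ^ (Fintype.card V) =
      (z ^ 2 - 1) ^ m *
        ((z ^ 2) • (1 : Matrix V V ℂ) - z • adjMatrix G + degMatrix G
          - (1 : Matrix V V ℂ)).det := by
  classical
  set n := Fintype.card V with hn
  set P : Polynomial ℂ :=
    ((X : ℂ[X]) • (1 : Matrix E E ℂ[X]) - (nbMatrix G).map C).det * (X ^ 2 - 1) ^ n
      - (X ^ 2 - 1) ^ m *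
        ((X ^ 2 : ℂ[X]) • (1 : Matrix V V ℂ[X]) - (X : ℂ[X]) • (adjMatrix G).map C + (degMatrix G).map C
          - (1 : Matrix V V ℂ[X])).det with hP
  have heval : ∀ w : ℂ, P.eval w =
      (w • (1 : Matrix E E ℂ) - nbMatrix G).det * (w ^ 2 - 1) ^ n
        - (w ^ 2 - 1) ^ m *
          ((w ^ 2) • (1 : Matrix V V ℂ) - w • adjMatrix G + degMatrix G
            - (1 : Matrix V V ℂ)).det := by
    intro w
    have e1 : eval w (((X : ℂ[X]) • (1 : Matrix E E ℂ[X]) - (nbMatrix G).map C).det)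
        = (w • (1 : Matrix E E ℂ) - nbMatrix G).det := by
      rw [show (eval w : ℂ[X] → ℂ) = (evalRingHom w : ℂ[X] → ℂ) from rfl,
        RingHom.map_det]
      congr 1
      ext i j
      simp only [Matrix.map_apply, Matrix.sub_apply, Matrix.smul_apply, Matrix.one_apply,
        coe_evalRingHom]
      split_ifs with h <;> simp [h, Matrix.one_apply]
    have e2 : eval w (((X ^ 2 : ℂ[X]) • (1 : Matrix V V ℂ[X]) - (X : ℂ[X]) • (adjMatrix G).map C
          + (degMatrix G).map C - (1 : Matrix V V ℂ[X])).det)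
        = ((w ^ 2) • (1 : Matrix V V ℂ) - w • adjMatrix G + degMatrix G
            - (1 : Matrix V V ℂ)).det := by
      rw [show (eval w : ℂ[X] → ℂ) = (evalRingHom w : ℂ[X] → ℂ) from rfl,
        RingHom.map_det]
      congr 1
      ext i j
      simp only [Matrix.map_apply, Matrix.sub_apply, Matrix.add_apply, Matrix.smul_apply,
        Matrix.one_apply, coe_evalRingHom]
      split_ifs with h <;> simp [h, Matrix.one_apply] <;> ring
    rw [hP]
    simp only [eval_sub, eval_mul, eval_pow, eval_one, eval_X, e1, e2]
  have hroot : ∀ w : ℂ, w ^ 2 - 1 ≠ 0 → P.IsRoot w := by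
    intro w hw
    rw [Polynomial.IsRoot, heval w, sub_eq_zero]
    exact IharaBass.key G m hm w hw
  have hPzero : P = 0 := by
    apply Polynomial.eq_zero_of_infinite_isRoot
    apply Set.Infinite.mono (s := ({1, -1} : Set ℂ)ᶜ)
    · intro w hw
      simp only [Set.mem_compl_iff, Set.mem_insert_iff, Set.mem_singleton_iff, not_or] at hw
      apply hroot
      have : w ^ 2 - 1 = (w - 1) * (w + 1) := by ring
      rw [this]
      exact mul_ne_zero (sub_ne_zero.mpr hw.1)
        (fun h => hw.2 (by linear_combination h))
    · exact Set.Finite.infinite_compl (Set.toFinite _)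
  have := heval z
  rw [hPzero, eval_zero] at this
  exact sub_eq_zero.mp this.symm
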